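/- Let λ and μ be simple valuations on the algebra A with basis (t_Γ), with λ strict. Suppose w is a valuation with λ ≤ w ≤ μ (pointwise), w agrees with μ on all t_α, and μ = C·λ for some C ≥ 1 on all single curves t_γ. Then w = C·λ on all of A. -/

import Mathlib

private lemma ereal_coe_mul_strictMono {c : ℝ} (hc : 0 < c) :
    StrictMono (fun x : EReal => (c : EReal) * x) := by
  intro a b hab
  induction a <;> induction b
  · exact absurd hab (lt_irrefl _)
  · simp only
    rw [EReal.coe_mul_bot_of_pos hc, ← EReal.coe_mul]
    exact EReal.bot_lt_coe _
  · simp only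
    rw [EReal.coe_mul_bot_of_pos hc, EReal.coe_mul_top_of_pos hc]
    exact bot_lt_top
  · exact absurd hab (by simp)
  · simp only
    norm_cast
    exact mul_lt_mul_of_pos_left (by exact_mod_cast hab) hc
  · simp only
    rw [EReal.coe_mul_top_of_pos hc, ← EReal.coe_mul]
    exact lt_top_iff_ne_top.2 (EReal.coe_ne_top _)
  · exact absurd hab (by simp)
  · exact absurd hab (by simp)
  · exact absurd hab (lt_irrefl _)

private lemma ereal_coe_mul_add {c : ℝ} (hc : 0 < c) (a b : EReal) :
    (c : EReal) * (a + b) = (c : EReal) * a + (c : EReal) * b := by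
  induction a <;> induction b
  · rw [EReal.bot_add, EReal.coe_mul_bot_of_pos hc, EReal.bot_add]
  · rw [EReal.bot_add, EReal.coe_mul_bot_of_pos hc, EReal.bot_add]
  · rw [EReal.bot_add, EReal.coe_mul_bot_of_pos hc, EReal.bot_add]
  · rw [EReal.add_bot, EReal.coe_mul_bot_of_pos hc, EReal.add_bot]
  · norm_cast; exact mul_add _ _ _
  · rw [EReal.coe_add_top, EReal.coe_mul_top_of_pos hc, ← EReal.coe_mul, EReal.coe_add_top]
  · rw [EReal.add_bot, EReal.coe_mul_bot_of_pos hc, EReal.add_bot]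
  · rw [EReal.top_add_coe, EReal.coe_mul_top_of_pos hc, ← EReal.coe_mul, EReal.top_add_coe]
  · rw [EReal.top_add_top, EReal.coe_mul_top_of_pos hc, EReal.top_add_top]

private lemma ereal_coe_mul_msum {c : ℝ} (hc : 0 < c) {α : Type*} (f : α → EReal)
    (m : Multiset α) :
    (c : EReal) * (m.map f).sum = (m.map fun x => (c : EReal) * f x).sum := by
  induction m using Multiset.induction with
  | empty => simp
  | cons a s ih =>
      simp only [Multiset.map_cons, Multiset.sum_cons, ereal_coe_mul_add hc, ih]

/-- Let `lv` and `mv` be simple valuations on the `ℂ`-algebra `A` with multicurve basis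
`(t_Γ)`, with `lv` strict.  If a valuation `w` satisfies `lv ≤ w ≤ mv` pointwise, agrees
with `mv` on all basis elements, and `mv = C·lv` on single curves for some `C ≥ 1`, then
`w = C·lv` on all of `A`. -/
theorem stmt12 (C : Type*) (A : Type*) [CommRing A] [Algebra ℂ A]
    (t : Module.Basis (Multiset C) ℂ A) (lv mv w : A → EReal) (c : ℝ) (hc : 1 ≤ c)
    -- `lv` and `mv` are simple valuations:
    (hlv0 : lv 0 = ⊥) (hmv0 : mv 0 = ⊥) (hw0 : w 0 = ⊥)
    (hlvC : ∀ z : ℂ, z ≠ 0 → lv (algebraMap ℂ A z) = 0)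
    (hmvC : ∀ z : ℂ, z ≠ 0 → mv (algebraMap ℂ A z) = 0)
    (hwC : ∀ z : ℂ, z ≠ 0 → w (algebraMap ℂ A z) = 0)
    (hlvmul : ∀ f g : A, lv (f * g) = lv f + lv g)
    (hmvmul : ∀ f g : A, mv (f * g) = mv f + mv g)
    (hwmul : ∀ f g : A, w (f * g) = w f + w g)
    (hlvadd : ∀ f g : A, lv (f + g) ≤ max (lv f) (lv g))
    (hmvadd : ∀ f g : A, mv (f + g) ≤ max (mv f) (mv g))
    (hwadd : ∀ f g : A, w (f + g) ≤ max (w f) (w g))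
    (hlvbasis : ∀ Γ : Multiset C, lv (t Γ) = (Γ.map fun γ => lv (t {γ})).sum)
    (hmvbasis : ∀ Γ : Multiset C, mv (t Γ) = (Γ.map fun γ => mv (t {γ})).sum)
    (hlvmax : ∀ f : A, f ≠ 0 → lv f = (t.repr f).support.sup fun Γ => lv (t Γ))
    (hmvmax : ∀ f : A, f ≠ 0 → mv f = (t.repr f).support.sup fun Γ => mv (t Γ))
    -- `lv` is strict:
    (hstrict : ∀ Γ Δ : Multiset C, Γ ≠ Δ → lv (t Γ) ≠ lv (t Δ))
    -- domination `lv ≤ w ≤ mv`: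
    (hlw : ∀ f : A, lv f ≤ w f) (hwm : ∀ f : A, w f ≤ mv f)
    -- `w` agrees with `mv` on all basis elements:
    (hwbasis : ∀ Γ : Multiset C, w (t Γ) = mv (t Γ))
    -- `mv = c·lv` on single curves:
    (hscale : ∀ γ : C, mv (t {γ}) = (c : EReal) * lv (t {γ})) :
    ∀ f : A, w f = (c : EReal) * lv f := by
  have hc0 : (0 : ℝ) < c := lt_of_lt_of_le one_pos hc
  -- `mv = c·lv` on all basis elements
  have hbscale : ∀ Γ : Multiset C, mv (t Γ) = (c : EReal) * lv (t Γ) := by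
    intro Γ
    rw [hmvbasis Γ, hlvbasis Γ, ereal_coe_mul_msum hc0]
    congr 1
    exact Multiset.map_congr rfl fun γ _ => hscale γ
  -- `w` of a scalar multiple of a basis element
  have hsmul : ∀ (z : ℂ) (x : A), z ≠ 0 → w (z • x) = w x := by
    intro z x hz
    rw [Algebra.smul_def, hwmul, hwC z hz, zero_add]
  have hlsmul : ∀ (z : ℂ) (x : A), z ≠ 0 → lv (z • x) = lv x := by
    intro z x hz
    rw [Algebra.smul_def, hlvmul, hlvC z hz, zero_add]
  have hwneg : ∀ x : A, w (-x) = w x := by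
    intro x
    have : (-1 : ℂ) • x = -x := by simp
    rw [← this, hsmul (-1) x (by norm_num)]
  -- equality case of the ultrametric inequality
  have heq : ∀ x y : A, w y < w x → w (x + y) = w x := by
    intro x y hxy
    refine le_antisymm ((hwadd x y).trans (max_le le_rfl hxy.le)) ?_
    have h2 : w x ≤ max (w (x + y)) (w y) := by
      have h := hwadd (x + y) (-y)
      rw [hwneg, add_neg_cancel_right] at h
      exact h
    rcases le_max_iff.1 h2 with h | h
    · exact h
    · exact absurd h (not_le.2 hxy)
  intro f
  by_cases hf : f = 0
  · rw [hf, hw0, hlv0, EReal.coe_mul_bot_of_pos hc0]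
  -- main case
  have hrepr : t.repr f ≠ 0 := fun h => hf (by
    have := congrArg t.repr.symm h
    simpa using this)
  have hS : ((t.repr f).support).Nonempty := Finsupp.support_nonempty_iff.2 hrepr
  obtain ⟨Γ₀, hΓ₀S, hsup⟩ := Finset.exists_mem_eq_sup _ hS fun Γ => lv (t Γ)
  have hlvf : lv f = lv (t Γ₀) := by rw [hlvmax f hf, hsup]
  set a : ℂ := t.repr f Γ₀ with ha_def
  have ha : a ≠ 0 := Finsupp.mem_support_iff.1 hΓ₀S
  set g : A := f - a • t Γ₀ with hg_def
  have hfg : a • t Γ₀ + g = f := by rw [hg_def]; ring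
  have hwa : w (a • t Γ₀) = (c : EReal) * lv (t Γ₀) := by
    rw [hsmul a _ ha, hwbasis, hbscale]
  -- support of g
  have hsupp : ∀ Δ : Multiset C, Δ ∈ (t.repr g).support →
      Δ ∈ (t.repr f).support ∧ Δ ≠ Γ₀ := by
    intro Δ hΔ
    rw [Finsupp.mem_support_iff] at hΔ
    have hval : t.repr g Δ = t.repr f Δ - a * (Finsupp.single Γ₀ (1 : ℂ)) Δ := by
      rw [hg_def, map_sub, map_smul, Module.Basis.repr_self]
      rfl
    by_cases hΔΓ : Δ = Γ₀
    · subst hΔΓ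
      rw [hval, Finsupp.single_eq_same, mul_one, sub_self] at hΔ
      exact absurd rfl hΔ
    · rw [hval, Finsupp.single_eq_of_ne hΔΓ, mul_zero, sub_zero] at hΔ
      exact ⟨Finsupp.mem_support_iff.2 hΔ, hΔΓ⟩
  by_cases hg : g = 0
  · rw [hg, add_zero] at hfg
    rw [← hfg, hwa, hlsmul a _ ha]
  · -- lv g < lv (t Γ₀)
    have hgS : ((t.repr g).support).Nonempty :=
      Finsupp.support_nonempty_iff.2 fun h => hg (by
        have := congrArg t.repr.symm h
        simpa using this)
    obtain ⟨Δ₀, hΔ₀, hsupg⟩ := Finset.exists_mem_eq_sup _ hgS fun Γ => lv (t Γ)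
    obtain ⟨hΔ₀S, hΔ₀ne⟩ := hsupp Δ₀ hΔ₀
    have hlt : lv g < lv (t Γ₀) := by
      rw [hlvmax g hg, hsupg]
      exact lt_of_le_of_ne (hsup ▸ Finset.le_sup (f := fun Γ => lv (t Γ)) hΔ₀S)
        (hstrict Δ₀ Γ₀ hΔ₀ne)
    have hwg : w g < w (a • t Γ₀) := by
      rw [hwa]
      calc w g ≤ mv g := hwm g
        _ = (c : EReal) * lv g := by
            rw [hmvmax g hg, hlvmax g hg]
            have h1 : ((t.repr g).support.sup fun Γ => mv (t Γ)) =
                (t.repr g).support.sup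
                  ((fun x : EReal => (c : EReal) * x) ∘ fun Γ => lv (t Γ)) :=
              Finset.sup_congr rfl fun Γ _ => hbscale Γ
            rw [h1, ← Finset.comp_sup_eq_sup_comp (fun x : EReal => (c : EReal) * x)
                (fun x y => (ereal_coe_mul_strictMono hc0).monotone.map_max)
                (EReal.coe_mul_bot_of_pos hc0)]
        _ < (c : EReal) * lv (t Γ₀) := ereal_coe_mul_strictMono hc0 hlt
    have hwf : w f = w (a • t Γ₀ + g) := by rw [hfg]
    rw [hwf, heq _ _ hwg, hwa, hlvf]
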